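/- Total variation bound under conditioning: let q and p be probability measures on a measurable space, and let B be a measurable set with q(B) > 0 and p(B) > 0. Then ‖q − p‖_TV ≥ min(q(B), p(B)) · ‖q(·|B) − p(·|B)‖_TV, where q(·|B) and p(·|B) are the conditional probability measures given B (i.e., q(A|B) = q(A ∩ B)/q(B)). -/

import Mathlib

open MeasureTheory ProbabilityTheory
open scoped ENNReal

noncomputable section

def tvDist {α : Type*} [MeasurableSpace α] (q p : Measure α) : ℝ :=
  sSup { d : ℝ | ∃ E : Set α, MeasurableSet E ∧ d = (q E).toReal - (p E).toReal }

lemma tvDist_ge {α : Type*} [MeasurableSpace α] (q p : Measure α)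
    [IsProbabilityMeasure q] [IsProbabilityMeasure p] {E : Set α} (hE : MeasurableSet E) :
    (q E).toReal - (p E).toReal ≤ tvDist q p := by
  apply le_csSup
  · refine ⟨1, ?_⟩
    rintro d ⟨F, hF, rfl⟩
    have h1 : (q F).toReal ≤ 1 := by
      have := ENNReal.toReal_mono (by simp) (prob_le_one (μ := q) (s := F))
      simpa using this
    have h2 : (0:ℝ) ≤ (p F).toReal := ENNReal.toReal_nonneg
    linarith
  · exact ⟨E, hE, rfl⟩

theorem tv_bound_under_conditioning {α : Type*} [MeasurableSpace α]
    (q p : Measure α) [IsProbabilityMeasure q] [IsProbabilityMeasure p]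
    (B : Set α) (hB : MeasurableSet B) (hqB : 0 < q B) (hpB : 0 < p B) :
    min (q B).toReal (p B).toReal * tvDist (ProbabilityTheory.cond q B)
        (ProbabilityTheory.cond p B)
      ≤ tvDist q p := by
  set a := (q B).toReal with ha
  set b := (p B).toReal with hb
  have hqBne : q B ≠ ∞ := measure_ne_top q B
  have hpBne : p B ≠ ∞ := measure_ne_top p B
  have ha0 : 0 < a := ENNReal.toReal_pos hqB.ne' hqBne
  have hb0 : 0 < b := ENNReal.toReal_pos hpB.ne' hpBne
  set m := min a b with hm
  have hm0 : 0 < m := lt_min ha0 hb0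
  set T := tvDist q p with hT
  have hT0 : 0 ≤ T := by
    have := tvDist_ge q p (E := ∅) MeasurableSet.empty
    simpa using this
  -- key per-set bound
  have key : ∀ E : Set α, MeasurableSet E →
      m * ((cond q B E).toReal - (cond p B E).toReal) ≤ T := by
    intro E hE
    have hqc : (cond q B E).toReal = (q (B ∩ E)).toReal / a := by
      rw [cond_apply hB q E, ENNReal.toReal_mul, ENNReal.toReal_inv, div_eq_inv_mul]
    have hpc : (cond p B E).toReal = (p (B ∩ E)).toReal / b := by
      rw [cond_apply hB p E, ENNReal.toReal_mul, ENNReal.toReal_inv, div_eq_inv_mul]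
    set x := (q (B ∩ E)).toReal with hx
    set y := (p (B ∩ E)).toReal with hy
    have hx0 : 0 ≤ x := ENNReal.toReal_nonneg
    have hy0 : 0 ≤ y := ENNReal.toReal_nonneg
    have hxa : x ≤ a := ENNReal.toReal_mono hqBne (measure_mono Set.inter_subset_left)
    have hyb : y ≤ b := ENNReal.toReal_mono hpBne (measure_mono Set.inter_subset_left)
    have hBE : MeasurableSet (B ∩ E) := hB.inter hE
    rcases le_total a b with hab | hab
    · -- m = a, use G = (B ∩ E) ∪ Bᶜ
      have hmeq : m = a := min_eq_left hab
      have hG : MeasurableSet ((B ∩ E) ∪ Bᶜ) := hBE.union hB.compl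
      have hTge : x + (1 - a) - (y + (1 - b)) ≤ T := by
        have hqG : (q ((B ∩ E) ∪ Bᶜ)).toReal = x + (1 - a) := by
          rw [measure_union (Disjoint.mono_left Set.inter_subset_left disjoint_compl_right) hB.compl,
            ENNReal.toReal_add (measure_ne_top _ _) (measure_ne_top _ _)]
          have : (q Bᶜ).toReal = 1 - a := by
            rw [measure_compl hB hqBne, measure_univ,
              ENNReal.toReal_sub_of_le prob_le_one ENNReal.one_ne_top, ENNReal.toReal_one]
          rw [this]
        have hpG : (p ((B ∩ E) ∪ Bᶜ)).toReal = y + (1 - b) := by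
          rw [measure_union (Disjoint.mono_left Set.inter_subset_left disjoint_compl_right) hB.compl,
            ENNReal.toReal_add (measure_ne_top _ _) (measure_ne_top _ _)]
          have : (p Bᶜ).toReal = 1 - b := by
            rw [measure_compl hB hpBne, measure_univ,
              ENNReal.toReal_sub_of_le prob_le_one ENNReal.one_ne_top, ENNReal.toReal_one]
          rw [this]
        have := tvDist_ge q p hG
        rw [hqG, hpG] at this
        exact this
      rw [hqc, hpc, hmeq]
      have h1 : a * (x / a - y / b) = x - (a / b) * y := by
        field_simp
      rw [h1]
      have hd1 : (0:ℝ) ≤ 1 - a / b := by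
        have : a / b ≤ 1 := (div_le_one hb0).mpr hab
        linarith
      have h2 : (1 - a / b) * y ≤ (1 - a / b) * b := mul_le_mul_of_nonneg_left hyb hd1
      have h3 : (1 - a / b) * b = b - a := by field_simp
      linarith
    · -- m = b
      have hmeq : m = b := min_eq_right hab
      have hTge : x - y ≤ T := tvDist_ge q p hBE
      rw [hqc, hpc, hmeq]
      have h1 : b * (x / a - y / b) = (b / a) * x - y := by
        field_simp
      rw [h1]
      have h2 : (b / a) * x ≤ 1 * x :=
        mul_le_mul_of_nonneg_right ((div_le_one ha0).mpr hab) hx0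
      linarith
  -- conclude
  have hsup : tvDist (cond q B) (cond p B) ≤ T / m := by
    apply Real.sSup_le
    · rintro d ⟨E, hE, rfl⟩
      rw [le_div_iff₀ hm0, mul_comm]
      exact key E hE
    · positivity
  calc m * tvDist (cond q B) (cond p B) ≤ m * (T / m) :=
        mul_le_mul_of_nonneg_left hsup hm0.le
    _ = T := by field_simp
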